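/- arXiv:1612.08581 — 2 statements merged into one kernel-verified Lean document; each statement's English description precedes it below -/
import Mathlib

section
/- For every 1 ≤ q ≤ Q, one has (Z − Z'_q)_− ≤ 8Kt · 1_{R_q}, where (a)_− denotes the negative part of a. -/
open scoped ENNReal

noncomputable section

/-- `ℤ^d`. -/
abbrev Zd (d : ℕ) := Fin d → ℤ

/-- The `ℓ¹`-norm on `ℤ^d`. -/
def norm1 {d : ℕ} (x : Zd d) : ℝ := ∑ i, |(x i : ℝ)|

/-- The `ℓ^∞`-norm on `ℤ^d`. -/
def normInf {d : ℕ} (x : Zd d) : ℝ := ((Finset.univ.sup fun i => (x i).natAbs : ℕ) : ℝ)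

/-- Given a frozen environment (`ωe z` = number of frogs initially at `z`,
`Se z ℓ k` = position at time `k` of the `ℓ`-th frog started at `z`), the passage time
`τ(x,y)`: the first time at which one of the frogs initially at `x` hits `y`
(`∞` if there is no such time, in particular if `ωe x = 0`). -/
def tauE {d : ℕ} (ωe : Zd d → ℕ) (Se : Zd d → ℕ → ℕ → Zd d) (x y : Zd d) : ℝ≥0∞ :=
  sInf {r : ℝ≥0∞ | ∃ k : ℕ, (∃ ℓ : ℕ, 1 ≤ ℓ ∧ ℓ ≤ ωe x ∧ Se x ℓ k = y) ∧ r = k}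

open Classical in
/-- The truncated two-point function `σ_t(x,y)` (with cut-off constant `K`):
`σ_t(x,y) = 4Kt` if `‖x−y‖_∞ ≤ t` and `τ(x,y) > 4Kt`; `σ_t(x,y) = 4K‖x−y‖_∞` if
`‖x−y‖_∞ > t`; and `σ_t(x,y) = τ(x,y)` otherwise. -/
def sigmaE {d : ℕ} (K : ℕ) (t : ℝ) (ωe : Zd d → ℕ) (Se : Zd d → ℕ → ℕ → Zd d)
    (x y : Zd d) : ℝ≥0∞ :=
  if normInf (x - y) ≤ t then min (tauE ωe Se x y) (ENNReal.ofReal (4 * K * t))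
  else ENNReal.ofReal (4 * K * normInf (x - y))

/-- The truncated first passage time `T_t(x,y)` associated with `σ_t`, for a frozen
environment. -/
def TtE {d : ℕ} (K : ℕ) (t : ℝ) (ωe : Zd d → ℕ) (Se : Zd d → ℕ → ℕ → Zd d)
    (x y : Zd d) : ℝ≥0∞ :=
  sInf {r : ℝ≥0∞ | ∃ m : ℕ, 1 ≤ m ∧ ∃ c : ℕ → Zd d, c 0 = x ∧ c m = y ∧
    r = ∑ i ∈ Finset.range m, sigmaE K t ωe Se (c i) (c (i + 1))}

/-- The box of the tiling of `ℤ^d` by copies of `(−t/2, t/2]^d` centered at `c ∈ ℤ^d`. -/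
def tBox {d : ℕ} (t : ℝ) (c : Zd d) : Set (Zd d) :=
  {z | ∀ i, (c i : ℝ) - t / 2 < z i ∧ (z i : ℝ) ≤ c i + t / 2}

/- ### Auxiliary lemmas -/

lemma abs_natAbs_cast (n : ℤ) : ((n.natAbs : ℝ)) = |(n : ℝ)| := by
  rw [Nat.cast_natAbs, Int.cast_abs]

lemma normInf_nonneg' {d : ℕ} (x : Zd d) : 0 ≤ normInf x := by
  exact Nat.cast_nonneg _

lemma normInf_tri {d : ℕ} (u v w : Zd d) :
    normInf (u - w) ≤ normInf (u - v) + normInf (v - w) := by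
  unfold normInf
  rw [← Nat.cast_add, Nat.cast_le]
  apply Finset.sup_le
  intro i _
  have h1 : (u - w) i = (u - v) i + (v - w) i := by simp [sub_eq_add_neg]
  calc ((u - w) i).natAbs ≤ ((u - v) i).natAbs + ((v - w) i).natAbs := by
        rw [h1]; exact Int.natAbs_add_le _ _
    _ ≤ _ := add_le_add
        (Finset.le_sup (f := fun i => ((u - v) i).natAbs) (Finset.mem_univ i))
        (Finset.le_sup (f := fun i => ((v - w) i).natAbs) (Finset.mem_univ i))

lemma normInf_box {d : ℕ} (hd : 2 ≤ d) {t : ℝ} {c u v : Zd d}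
    (hu : u ∈ tBox t c) (hv : v ∈ tBox t c) : normInf (u - v) ≤ t := by
  unfold normInf
  have hne : (Finset.univ : Finset (Fin d)).Nonempty :=
    ⟨⟨0, by omega⟩, Finset.mem_univ _⟩
  obtain ⟨i, -, hi⟩ := Finset.exists_mem_eq_sup Finset.univ hne
    (fun i => ((u - v) i).natAbs)
  rw [hi, abs_natAbs_cast]
  have h1 := hu i; have h2 := hv i
  have he : ((u - v) i : ℝ) = (u i : ℝ) - (v i : ℝ) := by
    push_cast [Pi.sub_apply]; ring
  rw [he, abs_le]
  constructor <;> [nlinarith [h1.1, h2.2]; nlinarith [h1.2, h2.1]]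

/-- `σ_t(x,y)` only depends on the environment at `x`. -/
lemma sigma_congr {d : ℕ} (K : ℕ) (t : ℝ) (ω₁ ω' : Zd d → ℕ)
    (S₁ S' : Zd d → ℕ → ℕ → Zd d) (x y : Zd d)
    (hω : ω' x = ω₁ x) (hS : S' x = S₁ x) :
    sigmaE K t ω' S' x y = sigmaE K t ω₁ S₁ x y := by
  unfold sigmaE tauE
  rw [hω, hS]

lemma TtE_le_path {d : ℕ} (K : ℕ) (t : ℝ) (ωe : Zd d → ℕ) (Se : Zd d → ℕ → ℕ → Zd d)
    (x y : Zd d) (n : ℕ) (hn : 1 ≤ n) (c : ℕ → Zd d) (h0 : c 0 = x) (hn' : c n = y) :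
    TtE K t ωe Se x y ≤ ∑ i ∈ Finset.range n, sigmaE K t ωe Se (c i) (c (i + 1)) :=
  sInf_le ⟨n, hn, c, h0, hn', rfl⟩

lemma sigma_le_close {d : ℕ} (K : ℕ) (t : ℝ) (ωe : Zd d → ℕ) (Se : Zd d → ℕ → ℕ → Zd d)
    {x y : Zd d} (h : normInf (x - y) ≤ t) :
    sigmaE K t ωe Se x y ≤ ENNReal.ofReal (4 * K * t) := by
  rw [sigmaE, if_pos h]; exact min_le_right _ _

/-- The key jump estimate: if `u` and `v` are in a common box (so `‖u−v‖_∞ ≤ t`),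
then jumping from `u` directly to `w` costs at most `8Kt` more than the step from
`v` to `w`, in any pair of environments. -/
lemma sigma_jump {d : ℕ} (K : ℕ) (t : ℝ) (ht : 0 < t)
    (ω ω' : Zd d → ℕ) (S S' : Zd d → ℕ → ℕ → Zd d)
    {u v w : Zd d} (huv : normInf (u - v) ≤ t) :
    sigmaE K t ω' S' u w ≤ ENNReal.ofReal (8 * K * t) + sigmaE K t ω S v w := by
  have hK0 : (0 : ℝ) ≤ (K : ℝ) := Nat.cast_nonneg _
  have htri := normInf_tri u v w
  by_cases h : normInf (u - w) ≤ t
  · refine le_trans (sigma_le_close K t ω' S' h) (le_trans ?_ le_self_add)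
    exact ENNReal.ofReal_le_ofReal (by nlinarith)
  · rw [sigmaE, if_neg h]
    by_cases h2 : normInf (v - w) ≤ t
    · refine le_trans ?_ le_self_add
      apply ENNReal.ofReal_le_ofReal
      nlinarith
    · rw [sigmaE, if_neg h2]
      have hvw0 : 0 ≤ normInf (v - w) := normInf_nonneg' _
      rw [← ENNReal.ofReal_add (by nlinarith) (by nlinarith)]
      apply ENNReal.ofReal_le_ofReal
      nlinarith

open Classical in
/-- **Lemma 4.4.**
Take the tiling of `ℤ^d` by copies `Λ_q` of `(−t/2, t/2]^d` centered at points of `ℤ^d`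
(encoded by the map `cent` sending a site to the center of its box). Resample the data
`U_q = ((ω(z))_{z ∈ Λ_q}, (S(z,ℓ))_{z ∈ Λ_q, ℓ})` of one box `Λ = Λ_q` (replacing the
environment `(ω₁, S₁)` by an independent copy `(ω₂, S₂)` on `Λ`), and let
`Z := T_t(0,x)` and `Z'_q` be the corresponding truncated passage times. If `π_t(0,x)` is
a path realizing `Z`, and `R_q` is the event that `π_t(0,x)` meets `Λ_q`, then
`(Z − Z'_q)_− ≤ 8Kt · 1_{R_q}`. -/
theorem frog_resampling_perturbation (d : ℕ) (hd : 2 ≤ d)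
    (C₀ γ : ℝ) (hC₀ : 0 < C₀) (hγ : 0 < γ)
    (K : ℕ) (hK : (d : ℝ) * (C₀ + γ + 1) < K)
    (t : ℝ) (ht : 0 < t)
    -- the underlying environment and an independent copy of it
    (ω₁ ω₂ : Zd d → ℕ) (S₁ S₂ : Zd d → ℕ → ℕ → Zd d)
    (hS₁0 : ∀ z ℓ, S₁ z ℓ 0 = z) (hS₁nn : ∀ z ℓ k, norm1 (S₁ z ℓ (k + 1) - S₁ z ℓ k) = 1)
    (hS₂0 : ∀ z ℓ, S₂ z ℓ 0 = z) (hS₂nn : ∀ z ℓ k, norm1 (S₂ z ℓ (k + 1) - S₂ z ℓ k) = 1)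
    -- the tiling of ℤ^d by boxes (−t/2, t/2]^d centered at points of ℤ^d
    (cent : Zd d → Zd d)
    (hcent_mem : ∀ z, z ∈ tBox t (cent z))
    (hcent_eq : ∀ z w, w ∈ tBox t (cent z) → cent w = cent z)
    -- the resampled box Λ_q
    (z₀ : Zd d)
    -- a minimizing path π_t(0,x) for T_t(0,x)
    (x : Zd d) (hx : x ≠ 0)
    (m : ℕ) (hm : 1 ≤ m) (π : ℕ → Zd d) (hπ0 : π 0 = 0) (hπm : π m = x)
    (hπopt : ∑ i ∈ Finset.range m, sigmaE K t ω₁ S₁ (π i) (π (i + 1))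
      = TtE K t ω₁ S₁ 0 x) :
    TtE K t
        (fun z => if z ∈ tBox t (cent z₀) then ω₂ z else ω₁ z)
        (fun z => if z ∈ tBox t (cent z₀) then S₂ z else S₁ z) 0 x
      - TtE K t ω₁ S₁ 0 x
    ≤ if ∃ i ≤ m, π i ∈ tBox t (cent z₀) then ENNReal.ofReal (8 * K * t) else 0 := by
  classical
  set Λ : Set (Zd d) := tBox t (cent z₀) with hΛ
  set ω' : Zd d → ℕ := fun z => if z ∈ Λ then ω₂ z else ω₁ z with hω'
  set S' : Zd d → ℕ → ℕ → Zd d := fun z => if z ∈ Λ then S₂ z else S₁ z with hS'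
  have hK0 : (0 : ℝ) ≤ (K : ℝ) := Nat.cast_nonneg _
  -- σ' agrees with σ outside Λ
  have hcong : ∀ i y, π i ∉ Λ →
      sigmaE K t ω' S' (π i) y = sigmaE K t ω₁ S₁ (π i) y := by
    intro i y hmem
    exact sigma_congr K t ω₁ ω' S₁ S' (π i) y (if_neg hmem) (if_neg hmem)
  set g : ℕ → ℝ≥0∞ := fun i => sigmaE K t ω₁ S₁ (π i) (π (i + 1)) with hg
  by_cases hR : ∃ i ≤ m, π i ∈ Λ
  · rw [if_pos hR]
    rw [tsub_le_iff_right]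
    -- first and last visit of the path to Λ
    have hex : ∃ i, i ≤ m ∧ π i ∈ Λ := by obtain ⟨i, h1, h2⟩ := hR; exact ⟨i, h1, h2⟩
    have hex2 : ∃ j, j ≤ m ∧ π (m - j) ∈ Λ := by
      obtain ⟨i, h1, h2⟩ := hR
      exact ⟨m - i, Nat.sub_le _ _, by rw [show m - (m - i) = i by omega]; exact h2⟩
    set a := Nat.find hex with ha_def
    obtain ⟨ham, haΛ⟩ := Nat.find_spec hex
    have hamin : ∀ i < a, π i ∉ Λ := by
      intro i hi hmem
      exact Nat.find_min hex hi ⟨by omega, hmem⟩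
    set b := m - Nat.find hex2 with hb_def
    have hbm : b ≤ m := Nat.sub_le _ _
    have hbΛ : π b ∈ Λ := (Nat.find_spec hex2).2
    have hbmax : ∀ i, b < i → i ≤ m → π i ∉ Λ := by
      intro i h1 h2 hmem
      have hni : ¬ (m - i < Nat.find hex2) := by
        intro hlt
        exact Nat.find_min hex2 hlt
          ⟨Nat.sub_le _ _, by rw [show m - (m - i) = i by omega]; exact hmem⟩
      omega
    have hab : a ≤ b := by
      by_contra hcon
      exact hbmax a (by omega) ham haΛ
    -- the original sum equals Z
    rw [← hπopt]
    by_cases hbm' : b = m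
    · -- the last visit is the endpoint: shortcut from π a directly to x
      set c : ℕ → Zd d := fun i => if i ≤ a then π i else x with hc
      have hT' : TtE K t ω' S' 0 x ≤
          ∑ i ∈ Finset.range (a + 1), sigmaE K t ω' S' (c i) (c (i + 1)) :=
        TtE_le_path K t ω' S' 0 x (a + 1) (by omega) c
          (by have h0 : c 0 = π 0 := if_pos (Nat.zero_le a); rw [h0, hπ0])
          (if_neg (by omega))
      refine le_trans hT' ?_
      rw [Finset.sum_range_succ]
      have h1 : ∑ i ∈ Finset.range a, sigmaE K t ω' S' (c i) (c (i + 1))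
          = ∑ i ∈ Finset.range a, g i := by
        apply Finset.sum_congr rfl
        intro i hi
        rw [Finset.mem_range] at hi
        have hci : c i = π i := if_pos (by omega)
        have hci1 : c (i + 1) = π (i + 1) := if_pos (by omega)
        rw [hci, hci1]
        exact hcong i _ (hamin i hi)
      have h2 : sigmaE K t ω' S' (c a) (c (a + 1)) ≤ ENNReal.ofReal (8 * K * t) := by
        have hca : c a = π a := if_pos le_rfl
        have hca1 : c (a + 1) = x := if_neg (by omega)
        rw [hca, hca1]
        have hxΛ : x ∈ Λ := by rw [← hπm, ← hbm']; exact hbΛ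
        refine le_trans (sigma_le_close K t ω' S' (normInf_box hd haΛ hxΛ)) ?_
        exact ENNReal.ofReal_le_ofReal (by nlinarith)
      rw [h1]
      have h3 : ∑ i ∈ Finset.range a, g i ≤ ∑ i ∈ Finset.range m, g i :=
        Finset.sum_le_sum_of_subset (Finset.range_subset_range.2 ham)
      calc ∑ i ∈ Finset.range a, g i + sigmaE K t ω' S' (c a) (c (a + 1))
          ≤ ∑ i ∈ Finset.range m, g i + ENNReal.ofReal (8 * K * t) :=
            add_le_add h3 h2
        _ = ENNReal.ofReal (8 * K * t) + ∑ i ∈ Finset.range m, g i := add_comm _ _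
    · -- b < m : shortcut from π a to π (b+1)
      have hblt : b < m := by omega
      set n := a + (m - b) with hn_def
      set c : ℕ → Zd d := fun i => if i ≤ a then π i else π (i + (b - a)) with hc
      have hcn : c n = x := by
        have h0 : c n = π (n + (b - a)) := if_neg (by omega)
        rw [h0, show n + (b - a) = m by omega, hπm]
      have hT' : TtE K t ω' S' 0 x ≤
          ∑ i ∈ Finset.range n, sigmaE K t ω' S' (c i) (c (i + 1)) :=
        TtE_le_path K t ω' S' 0 x n (by omega) c
          (by have h0 : c 0 = π 0 := if_pos (Nat.zero_le a); rw [h0, hπ0]) hcn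
      refine le_trans hT' ?_
      set f : ℕ → ℝ≥0∞ := fun i => sigmaE K t ω' S' (c i) (c (i + 1)) with hf
      have hsplit : ∑ i ∈ Finset.range n, f i
          = (∑ i ∈ Finset.range a, f i + f a) + ∑ i ∈ Finset.Ico (a + 1) n, f i := by
        rw [← Finset.sum_range_succ]
        rw [Finset.range_eq_Ico, Finset.range_eq_Ico]
        exact (Finset.sum_Ico_consecutive f (by omega) (by omega)).symm
      rw [hsplit]
      -- the three pieces
      have h1 : ∑ i ∈ Finset.range a, f i = ∑ i ∈ Finset.range a, g i := by
        apply Finset.sum_congr rfl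
        intro i hi
        rw [Finset.mem_range] at hi
        have hci : c i = π i := if_pos (by omega)
        have hci1 : c (i + 1) = π (i + 1) := if_pos (by omega)
        show sigmaE K t ω' S' (c i) (c (i + 1)) = g i
        rw [hci, hci1]
        exact hcong i _ (hamin i hi)
      have h2 : f a ≤ ENNReal.ofReal (8 * K * t) + g b := by
        have hca : c a = π a := if_pos le_rfl
        have hca1 : c (a + 1) = π (b + 1) := by
          have h0 : c (a + 1) = π (a + 1 + (b - a)) := if_neg (by omega)
          rw [h0, show a + 1 + (b - a) = b + 1 by omega]
        show sigmaE K t ω' S' (c a) (c (a + 1)) ≤ _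
        rw [hca, hca1]
        exact sigma_jump K t ht ω₁ ω' S₁ S' (normInf_box hd haΛ hbΛ)
      have h3 : ∑ i ∈ Finset.Ico (a + 1) n, f i = ∑ i ∈ Finset.Ico (b + 1) m, g i := by
        rw [Finset.sum_Ico_eq_sum_range, Finset.sum_Ico_eq_sum_range]
        rw [show n - (a + 1) = m - (b + 1) by omega]
        apply Finset.sum_congr rfl
        intro k hk
        rw [Finset.mem_range] at hk
        have hc1 : c (a + 1 + k) = π (b + 1 + k) := by
          have h0 : c (a + 1 + k) = π (a + 1 + k + (b - a)) := if_neg (by omega)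
          rw [h0, show a + 1 + k + (b - a) = b + 1 + k by omega]
        have hc2 : c (a + 1 + k + 1) = π (b + 1 + k + 1) := by
          have h0 : c (a + 1 + k + 1) = π (a + 1 + k + 1 + (b - a)) := if_neg (by omega)
          rw [h0, show a + 1 + k + 1 + (b - a) = b + 1 + k + 1 by omega]
        show sigmaE K t ω' S' (c (a + 1 + k)) (c (a + 1 + k + 1)) = g (b + 1 + k)
        rw [hc1, hc2]
        exact hcong (b + 1 + k) _ (hbmax (b + 1 + k) (by omega) (by omega))
      rw [h1, h3]
      have hsum2 : g b + ∑ i ∈ Finset.Ico (b + 1) m, g i = ∑ i ∈ Finset.Ico b m, g i :=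
        (Finset.sum_eq_sum_Ico_succ_bot hblt g).symm
      have hfinal : ∑ i ∈ Finset.range a, g i + ∑ i ∈ Finset.Ico b m, g i
          ≤ ∑ i ∈ Finset.range m, g i := by
        calc ∑ i ∈ Finset.range a, g i + ∑ i ∈ Finset.Ico b m, g i
            ≤ ∑ i ∈ Finset.range b, g i + ∑ i ∈ Finset.Ico b m, g i :=
              add_le_add_left (Finset.sum_le_sum_of_subset (Finset.range_subset_range.2 hab)) _
          _ = ∑ i ∈ Finset.range m, g i := by
              rw [Finset.range_eq_Ico, Finset.range_eq_Ico]
              exact Finset.sum_Ico_consecutive g (by omega) (by omega)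
      calc (∑ i ∈ Finset.range a, g i + f a) + ∑ i ∈ Finset.Ico (b + 1) m, g i
          ≤ (∑ i ∈ Finset.range a, g i + (ENNReal.ofReal (8 * K * t) + g b))
              + ∑ i ∈ Finset.Ico (b + 1) m, g i :=
            add_le_add_left (add_le_add_right h2 _) _
        _ = ENNReal.ofReal (8 * K * t)
              + (∑ i ∈ Finset.range a, g i + (g b + ∑ i ∈ Finset.Ico (b + 1) m, g i)) := by
            ring
        _ = ENNReal.ofReal (8 * K * t)
              + (∑ i ∈ Finset.range a, g i + ∑ i ∈ Finset.Ico b m, g i) := by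
            rw [hsum2]
        _ ≤ ENNReal.ofReal (8 * K * t) + ∑ i ∈ Finset.range m, g i :=
            add_le_add_right hfinal _
  · rw [if_neg hR]
    -- the path avoids Λ, so its σ'-cost equals its σ-cost
    have hT' : TtE K t ω' S' 0 x ≤ TtE K t ω₁ S₁ 0 x := by
      rw [← hπopt]
      refine le_trans (TtE_le_path K t ω' S' 0 x m hm π hπ0 hπm) (le_of_eq ?_)
      apply Finset.sum_congr rfl
      intro i hi
      rw [Finset.mem_range] at hi
      exact hcong i _ (fun hmem => hR ⟨i, by omega, hmem⟩)
    exact le_of_eq (tsub_eq_zero_of_le hT')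

end
end

section
/- There exists a universal constant c ∈ (0,∞), independent of x, y and the choice of maps, such that for each x ∈ ℝ^d there exists a family (g_{1,x}, g_{2,x}, …, g_{d,x}) ∈ 𝒪(ℤ^d)^d with g_{1,x} = Id_{ℝ^d} for which the linear map L_x(y) := Σ_{i=1}^d y_i g_{i,x}(x) satisfies c‖x‖₁‖y‖₁ ≤ ‖L_x(y)‖₁ ≤ ‖x‖₁‖y‖₁ for all y ∈ ℝ^d. -/
noncomputable section

def norm1R {d : ℕ} (x : Fin d → ℝ) : ℝ := ∑ i, |x i|

structure GridSym (d : ℕ) where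
  perm : Equiv.Perm (Fin d)
  sign : Fin d → Bool

def GridSym.applyR {d : ℕ} (g : GridSym d) (x : Fin d → ℝ) : Fin d → ℝ :=
  fun i => (if g.sign i then 1 else -1) * x (g.perm i)

def GridSym.id (d : ℕ) : GridSym d := ⟨Equiv.refl _, fun _ => true⟩

namespace AdaptedAux

open Matrix Finset

variable {d : ℕ}

lemma norm1R_nonneg (x : Fin d → ℝ) : 0 ≤ norm1R x :=
  Finset.sum_nonneg fun i _ => abs_nonneg _

lemma abs_applyR (g : GridSym d) (x : Fin d → ℝ) (i : Fin d) :
    |g.applyR x i| = |x (g.perm i)| := by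
  unfold GridSym.applyR
  split <;> simp

lemma norm1R_applyR (g : GridSym d) (x : Fin d → ℝ) :
    norm1R (g.applyR x) = norm1R x := by
  unfold norm1R
  simp_rw [abs_applyR]
  exact Equiv.sum_comp g.perm (fun i => |x i|)

lemma upper_bound (x : Fin d → ℝ) (g : Fin d → GridSym d) (y : Fin d → ℝ) :
    norm1R (fun i => ∑ j, y j * (g j).applyR x i) ≤ norm1R x * norm1R y := by
  unfold norm1R
  calc ∑ i, |∑ j, y j * (g j).applyR x i|
      ≤ ∑ i, ∑ j, |y j * (g j).applyR x i| :=
        Finset.sum_le_sum fun i _ => Finset.abs_sum_le_sum_abs _ _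
    _ = ∑ j, ∑ i, |y j| * |(g j).applyR x i| := by
        rw [Finset.sum_comm]
        simp [abs_mul]
    _ = ∑ j, |y j| * norm1R x := by
        refine Finset.sum_congr rfl fun j _ => ?_
        rw [← Finset.mul_sum]
        have := norm1R_applyR (g j) x
        unfold norm1R at this
        rw [this]
        rfl
    _ = (∑ i, |x i|) * ∑ j, |y j| := by
        unfold norm1R
        rw [← Finset.sum_mul]
        ring


lemma det_updateRow_sum'' (M : Matrix (Fin d) (Fin d) ℝ) (z : Fin d) (A : Finset (Fin d))
    (f : Fin d → Fin d → ℝ) :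
    (M.updateRow z (∑ i ∈ A, f i)).det = ∑ i ∈ A, (M.updateRow z (f i)).det := by
  classical
  induction A using Finset.induction_on with
  | empty =>
      simp only [Finset.sum_empty]
      exact Matrix.det_eq_zero_of_row_eq_zero z (by simp)
  | @insert j A' hj ih =>
      rw [Finset.sum_insert hj, Matrix.det_updateRow_add, ih, Finset.sum_insert hj]

/-- the "real" row: image of `x` under swap of `i₀,t` with sign `ε` at coordinate `t`. -/
def rcol (x : Fin d → ℝ) (i₀ t : Fin d) (ε : Bool) : Fin d → ℝ :=
  fun i => (if (if i = t then ε else true) then 1 else -1) * x (Equiv.swap i₀ t i)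

/-- the "pure" part: `x i₀` at coordinate `t`. -/
def pcol (x : Fin d → ℝ) (i₀ t : Fin d) : Fin d → ℝ := Pi.single t (x i₀)

/-- the fixed part. -/
def fcol (x : Fin d → ℝ) (i₀ t : Fin d) : Fin d → ℝ :=
  fun i => if i = t then 0 else x (Equiv.swap i₀ t i)

lemma rcol_true (x : Fin d → ℝ) (i₀ t : Fin d) :
    rcol x i₀ t true = fcol x i₀ t + pcol x i₀ t := by
  funext i
  by_cases h : i = t <;>
    simp [rcol, pcol, fcol, h, Pi.single_apply, Equiv.swap_apply_right]

lemma rcol_false (x : Fin d → ℝ) (i₀ t : Fin d) :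
    rcol x i₀ t false = fcol x i₀ t + (-1 : ℝ) • pcol x i₀ t := by
  funext i
  by_cases h : i = t <;>
    simp [rcol, pcol, fcol, h, Pi.single_apply, Equiv.swap_apply_right]

/-- the hybrid matrix: row `z` is `x`; rows in `A` are real rows, others pure rows. -/
def mat (x : Fin d → ℝ) (i₀ z : Fin d) (A : Finset (Fin d)) (s : Fin d → Bool) :
    Matrix (Fin d) (Fin d) ℝ :=
  Matrix.of fun j i =>
    if j = z then x i
    else if j ∈ A then rcol x i₀ (Equiv.swap z i₀ j) (s j) i
    else pcol x i₀ (Equiv.swap z i₀ j) i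

lemma mat_det_empty (x : Fin d → ℝ) (i₀ z : Fin d) (s : Fin d → Bool) (hd : 1 ≤ d) :
    |(mat x i₀ z ∅ s).det| = |x i₀| ^ d := by
  classical
  set π := Equiv.swap z i₀ with hπ
  set M := mat x i₀ z ∅ s with hM
  have hrowz : M z = x := by funext i; simp [hM, mat]
  have hrow : ∀ j, j ≠ z → M j = Pi.single (π j) (x i₀) := by
    intro j hj; funext i; simp [hM, mat, hj, pcol, hπ]
  have hx : x = ∑ i, (fun i' => x i' • (Pi.single i' 1 : Fin d → ℝ)) i := by
    funext k
    simp [Pi.single_apply]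
  have h1 : M.det = ∑ i, (M.updateRow z (x i • (Pi.single i 1 : Fin d → ℝ))).det := by
    conv_lhs => rw [← Matrix.updateRow_eq_self M z, hrowz, hx]
    exact det_updateRow_sum'' M z Finset.univ _
  have h2 : ∀ i, i ≠ i₀ → (M.updateRow z (x i • (Pi.single i 1 : Fin d → ℝ))).det = 0 := by
    intro i hi
    have hpi : π i ≠ z := by
      intro h
      apply hi
      have := congrArg π h
      rw [Equiv.swap_apply_self, hπ, Equiv.swap_apply_left] at this
      exact this
    set M₂ := M.updateRow z (Pi.single i 1 : Fin d → ℝ) with hM₂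
    have hd1 : (M.updateRow z (x i • (Pi.single i 1 : Fin d → ℝ))).det = x i * M₂.det := by
      rw [hM₂, Matrix.det_updateRow_smul]
    have hr : M₂ (π i) = (x i₀) • (Pi.single i 1 : Fin d → ℝ) := by
      rw [hM₂, Matrix.updateRow_ne hpi, hrow _ hpi]
      have hππ : π (π i) = i := Equiv.swap_apply_self _ _ _
      rw [hππ]
      funext k
      simp [Pi.single_apply]
    have h2' : M₂.det = (M₂.updateRow (π i) ((x i₀) • (Pi.single i 1 : Fin d → ℝ))).det := by
      rw [← hr, Matrix.updateRow_eq_self]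
    have hz : (M₂.updateRow (π i) (Pi.single i 1 : Fin d → ℝ)) z
        = (M₂.updateRow (π i) (Pi.single i 1 : Fin d → ℝ)) (π i) := by
      rw [Matrix.updateRow_ne (Ne.symm hpi), Matrix.updateRow_self, hM₂,
        Matrix.updateRow_self]
    rw [hd1, h2', Matrix.det_updateRow_smul,
      Matrix.det_zero_of_row_eq (Ne.symm hpi) hz]
    ring
  have h3 : (M.updateRow z (x i₀ • (Pi.single i₀ 1 : Fin d → ℝ))).det
      = x i₀ * ((x i₀) ^ (d - 1) * ((Equiv.Perm.sign π : ℤ) : ℝ)) := by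
    rw [Matrix.det_updateRow_smul]
    have hprm : M.updateRow z (Pi.single i₀ 1 : Fin d → ℝ)
        = Matrix.diagonal (fun j => if j = z then (1:ℝ) else x i₀) * π.permMatrix ℝ := by
      funext j i
      by_cases hj : j = z
      · subst hj
        by_cases hi : i = i₀
        · simp [Matrix.updateRow_self, Matrix.diagonal_mul, Equiv.Perm.permMatrix,
            PEquiv.toMatrix_apply, Equiv.toPEquiv_apply, Pi.single_apply, hπ,
            Equiv.swap_apply_left, hi]
        · simp [Matrix.updateRow_self, Matrix.diagonal_mul, Equiv.Perm.permMatrix,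
            PEquiv.toMatrix_apply, Equiv.toPEquiv_apply, Pi.single_apply, hπ,
            Equiv.swap_apply_left, hi, Ne.symm hi]
      · rw [Matrix.updateRow_ne hj, hrow _ hj]
        by_cases hi : i = π j
        · simp [Matrix.diagonal_mul, Equiv.Perm.permMatrix, PEquiv.toMatrix_apply,
            Equiv.toPEquiv_apply, Pi.single_apply, hi, hj, Ne.symm hj]
        · simp [Matrix.diagonal_mul, Equiv.Perm.permMatrix, PEquiv.toMatrix_apply,
            Equiv.toPEquiv_apply, Pi.single_apply, hi, hj, Ne.symm hi, Ne.symm hj]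
    rw [hprm, Matrix.det_mul, Matrix.det_diagonal, Matrix.det_permutation]
    have hprod : (∏ j, if j = z then (1:ℝ) else x i₀) = (x i₀) ^ (d - 1) := by
      rw [← Finset.mul_prod_erase Finset.univ _ (Finset.mem_univ z)]
      simp only [if_pos rfl, one_mul]
      rw [Finset.prod_ite_of_false, Finset.prod_const]
      · congr 1
        rw [Finset.card_erase_of_mem (Finset.mem_univ z)]
        simp
      · intro j hj
        exact Finset.ne_of_mem_erase hj
    rw [hprod]
  have hsum : M.det = x i₀ * ((x i₀) ^ (d - 1) * ((Equiv.Perm.sign π : ℤ) : ℝ)) := by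
    rw [h1, Finset.sum_eq_single i₀]
    · exact h3
    · intro i _ hi; exact h2 i hi
    · intro h; exact absurd (Finset.mem_univ i₀) h
  rw [hsum]
  have habs : |((Equiv.Perm.sign π : ℤ) : ℝ)| = 1 := by
    rcases Int.units_eq_one_or (Equiv.Perm.sign π) with h | h <;> rw [h] <;> norm_num
  rw [abs_mul, abs_mul, habs, mul_one, abs_pow, ← pow_succ']
  congr 1
  omega

lemma mat_insert_eq (x : Fin d → ℝ) (i₀ z : Fin d) (A : Finset (Fin d)) (s : Fin d → Bool)
    (j : Fin d) (hj : j ∉ A) (hjz : j ≠ z) (ε : Bool) :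
    mat x i₀ z (insert j A) (Function.update s j ε)
      = (mat x i₀ z A s).updateRow j (rcol x i₀ (Equiv.swap z i₀ j) ε) := by
  funext j' i
  by_cases h : j' = j
  · subst h
    rw [Matrix.updateRow_self]
    simp [mat, hjz]
  · rw [Matrix.updateRow_ne h]
    by_cases hz : j' = z
    · simp [mat, hz]
    · by_cases hA : j' ∈ A
      · simp [mat, hz, hA, h, Function.update_of_ne h]
      · have : j' ∉ insert j A := by simp [h, hA]
        simp only [mat, Matrix.of_apply, hz, hA, this, if_neg, ite_false]

lemma mat_self_updateRow (x : Fin d → ℝ) (i₀ z : Fin d) (A : Finset (Fin d)) (s : Fin d → Bool)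
    (j : Fin d) (hj : j ∉ A) (hjz : j ≠ z) :
    (mat x i₀ z A s).updateRow j (pcol x i₀ (Equiv.swap z i₀ j)) = mat x i₀ z A s := by
  have : (mat x i₀ z A s) j = pcol x i₀ (Equiv.swap z i₀ j) := by
    funext i; simp [mat, hjz, hj]
  rw [← this, Matrix.updateRow_eq_self]

lemma exists_sign (x : Fin d → ℝ) (i₀ z : Fin d) (hd : 1 ≤ d) :
    ∀ A : Finset (Fin d), z ∉ A →
      ∃ s : Fin d → Bool, |x i₀| ^ d ≤ |(mat x i₀ z A s).det| := by
  classical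
  intro A
  induction A using Finset.induction_on with
  | empty =>
      intro _
      exact ⟨fun _ => true, le_of_eq (mat_det_empty x i₀ z _ hd).symm⟩
  | @insert j A' hj ih =>
      intro hz
      have hjz : j ≠ z := by rintro rfl; exact hz (Finset.mem_insert_self _ _)
      have hzA' : z ∉ A' := fun h => hz (Finset.mem_insert_of_mem h)
      obtain ⟨s, hs⟩ := ih hzA'
      set M := mat x i₀ z A' s with hM
      set t := Equiv.swap z i₀ j with ht
      have htrue : (mat x i₀ z (insert j A') (Function.update s j true)).det
          = (M.updateRow j (fcol x i₀ t)).det + M.det := by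
        rw [mat_insert_eq x i₀ z A' s j hj hjz true, rcol_true,
          Matrix.det_updateRow_add]
        rw [mat_self_updateRow x i₀ z A' s j hj hjz]
      have hfalse : (mat x i₀ z (insert j A') (Function.update s j false)).det
          = (M.updateRow j (fcol x i₀ t)).det - M.det := by
        rw [mat_insert_eq x i₀ z A' s j hj hjz false, rcol_false,
          Matrix.det_updateRow_add, Matrix.det_updateRow_smul]
        rw [mat_self_updateRow x i₀ z A' s j hj hjz]
        ring
      rcases le_total (|x i₀| ^ d) |(mat x i₀ z (insert j A') (Function.update s j true)).det|
        with h | h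
      · exact ⟨Function.update s j true, h⟩
      · refine ⟨Function.update s j false, ?_⟩
        have key : |(mat x i₀ z (insert j A') (Function.update s j true)).det|
            + |(mat x i₀ z (insert j A') (Function.update s j false)).det|
            ≥ 2 * |M.det| := by
          rw [htrue, hfalse]
          have := abs_sub_abs_le_abs_sub ((M.updateRow j (fcol x i₀ t)).det + M.det)
            ((M.updateRow j (fcol x i₀ t)).det - M.det)
          have h2 : ((M.updateRow j (fcol x i₀ t)).det + M.det)
              - ((M.updateRow j (fcol x i₀ t)).det - M.det) = 2 * M.det := by ring
          calc |(M.updateRow j (fcol x i₀ t)).det + M.det|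
              + |(M.updateRow j (fcol x i₀ t)).det - M.det|
              ≥ |((M.updateRow j (fcol x i₀ t)).det + M.det)
                - ((M.updateRow j (fcol x i₀ t)).det - M.det)| := abs_sub _ _
            _ = 2 * |M.det| := by rw [h2, abs_mul]; norm_num
        have := hs
        nlinarith [abs_nonneg (mat x i₀ z (insert j A') (Function.update s j false)).det]

lemma prod_if_one (k : Fin d) (m : ℝ) : (∏ r, if r = k then (1:ℝ) else m) = m ^ (d-1) := by
  rw [← Finset.mul_prod_erase Finset.univ _ (Finset.mem_univ k)]
  simp only [if_pos rfl, one_mul]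
  rw [Finset.prod_ite_of_false, Finset.prod_const]
  · congr 1
    rw [Finset.card_erase_of_mem (Finset.mem_univ k)]
    simp
  · intro j hj
    exact Finset.ne_of_mem_erase hj

lemma det_abs_le (M : Matrix (Fin d) (Fin d) ℝ) (f : Fin d → ℝ)
    (h : ∀ r c, |M r c| ≤ f r) : |M.det| ≤ (Nat.factorial d : ℝ) * ∏ r, f r := by
  rw [Matrix.det_apply]
  calc |∑ σ : Equiv.Perm (Fin d), Equiv.Perm.sign σ • ∏ i, M (σ i) i|
      ≤ ∑ σ : Equiv.Perm (Fin d), |Equiv.Perm.sign σ • ∏ i, M (σ i) i| :=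
        Finset.abs_sum_le_sum_abs _ _
    _ ≤ ∑ _σ : Equiv.Perm (Fin d), ∏ r, f r := by
        refine Finset.sum_le_sum fun σ _ => ?_
        have h1 : |Equiv.Perm.sign σ • (∏ i, M (σ i) i : ℝ)| = |∏ i, M (σ i) i| := by
          rcases Int.units_eq_one_or (Equiv.Perm.sign σ) with hs | hs <;> rw [hs] <;> simp
        rw [h1]
        calc |∏ i, M (σ i) i| = ∏ i, |M (σ i) i| := Finset.abs_prod _ _
          _ ≤ ∏ i, f (σ i) :=
            Finset.prod_le_prod (fun i _ => abs_nonneg _) (fun i _ => h _ _)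
          _ = ∏ r, f r := Equiv.prod_comp σ f
    _ = (Nat.factorial d : ℝ) * ∏ r, f r := by
        rw [Finset.sum_const, Finset.card_univ, Fintype.card_perm, Fintype.card_fin,
          nsmul_eq_mul]

end AdaptedAux

open AdaptedAux Matrix Finset in
/-- **Lemma 3.2 (Garet–Marchand).**
There is a universal constant `c ∈ (0,∞)` (independent of `x`, `y` and of the choice of
maps) such that for every `x ∈ ℝ^d` there are `g_{1,x}, …, g_{d,x} ∈ 𝒪(ℤ^d)` with
`g_{1,x} = Id` for which the linear map `L_x(y) := ∑ᵢ yᵢ g_{i,x}(x)` satisfies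
`c ‖x‖₁ ‖y‖₁ ≤ ‖L_x(y)‖₁ ≤ ‖x‖₁ ‖y‖₁` for all `y ∈ ℝ^d`. -/
theorem adapted_basis_exists (d : ℕ) (hd : 2 ≤ d) :
    ∃ c : ℝ, 0 < c ∧
      ∀ x : Fin d → ℝ, ∃ g : Fin d → GridSym d,
        g (⟨0, by omega⟩ : Fin d) = GridSym.id d ∧
        ∀ y : Fin d → ℝ,
          c * norm1R x * norm1R y ≤ norm1R (fun i => ∑ j, y j * (g j).applyR x i) ∧
          norm1R (fun i => ∑ j, y j * (g j).applyR x i) ≤ norm1R x * norm1R y := by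
  classical
  have hd0 : 0 < d := by omega
  set c : ℝ := ((d:ℝ)^2 * Nat.factorial d)⁻¹ with hc
  have hK : (0:ℝ) < (d:ℝ)^2 * Nat.factorial d := by positivity
  refine ⟨c, inv_pos.mpr hK, ?_⟩
  intro x
  set z : Fin d := ⟨0, by omega⟩ with hz
  have : Nonempty (Fin d) := ⟨z⟩
  obtain ⟨i₀, hi₀⟩ := Finite.exists_max (fun i => |x i|)
  set m : ℝ := |x i₀| with hm
  have hm0 : 0 ≤ m := abs_nonneg _
  obtain ⟨s, hs⟩ := exists_sign x i₀ z (by omega) (Finset.univ.erase z)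
    (Finset.notMem_erase z _)
  set g : Fin d → GridSym d := fun j =>
    if j = z then GridSym.id d
    else ⟨Equiv.swap i₀ (Equiv.swap z i₀ j),
          fun i => if i = Equiv.swap z i₀ j then s j else true⟩ with hg
  have hgz : g z = GridSym.id d := by simp [hg]
  refine ⟨g, hgz, ?_⟩
  -- the matrix of rows
  set N : Matrix (Fin d) (Fin d) ℝ := Matrix.of fun j i => (g j).applyR x i with hN
  have hNmat : N = mat x i₀ z (Finset.univ.erase z) s := by
    funext j i
    by_cases hj : j = z
    · subst hj
      simp [hN, hg, mat, GridSym.applyR, GridSym.id]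
    · have hmem : j ∈ Finset.univ.erase z := Finset.mem_erase.mpr ⟨hj, Finset.mem_univ j⟩
      simp only [hN, hg, Matrix.of_apply, if_neg hj, mat, hmem, ite_true, ite_false]
      simp [GridSym.applyR, rcol, hj]
  have hNbnd : ∀ j i, |N j i| ≤ m := by
    intro j i
    rw [hN]
    simp only [Matrix.of_apply]
    rw [abs_applyR]
    exact hi₀ _
  intro y
  set B : Matrix (Fin d) (Fin d) ℝ := Nᵀ with hB
  have hBv : (B *ᵥ y) = fun i => ∑ j, y j * (g j).applyR x i := by
    funext i
    simp only [Matrix.mulVec, dotProduct, hB, Matrix.transpose_apply, hN,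
      Matrix.of_apply]
    exact Finset.sum_congr rfl fun j _ => mul_comm _ _
  have hupper := upper_bound x g y
  refine ⟨?_, hupper⟩
  -- lower bound
  set V : ℝ := norm1R (fun i => ∑ j, y j * (g j).applyR x i) with hV
  have hV0 : 0 ≤ V := norm1R_nonneg _
  have hdet : m ^ d ≤ |B.det| := by
    rw [hB, Matrix.det_transpose, hNmat]
    exact hs
  -- adjugate entries bound
  have hadj : ∀ i k, |B.adjugate i k| ≤ (Nat.factorial d : ℝ) * m ^ (d-1) := by
    intro i k
    rw [Matrix.adjugate_apply]
    have hb : ∀ r cc, |(B.updateRow k (Pi.single i 1)) r cc|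
        ≤ (fun r => if r = k then (1:ℝ) else m) r := by
      intro r cc
      by_cases hr : r = k
      · subst hr
        rw [Matrix.updateRow_self]
        simp only [if_pos rfl]
        rw [Pi.single_apply]
        split <;> norm_num
      · rw [Matrix.updateRow_ne hr]
        simp only [if_neg hr]
        rw [hB, Matrix.transpose_apply]
        exact hNbnd _ _
    have := det_abs_le (B.updateRow k (Pi.single i 1)) _ hb
    rwa [prod_if_one] at this
  -- Cramer
  have hcram : B.adjugate *ᵥ (B *ᵥ y) = B.det • y := by
    rw [Matrix.mulVec_mulVec, Matrix.adjugate_mul, Matrix.smul_mulVec,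
      Matrix.one_mulVec]
  have hVnorm : norm1R (B *ᵥ y) = V := by rw [hBv]
  have hrow : ∀ i : Fin d, |B.det| * |y i| ≤ ((Nat.factorial d : ℝ) * m ^ (d-1)) * V := by
    intro i
    have h1 : B.det * y i = ∑ k, B.adjugate i k * (B *ᵥ y) k := by
      have := congrFun hcram i
      simp only [Matrix.mulVec, dotProduct, Pi.smul_apply, smul_eq_mul] at this
      rw [← this]
      simp [Matrix.mulVec, dotProduct]
    calc |B.det| * |y i| = |B.det * y i| := (abs_mul _ _).symm
      _ = |∑ k, B.adjugate i k * (B *ᵥ y) k| := by rw [h1]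
      _ ≤ ∑ k, |B.adjugate i k * (B *ᵥ y) k| := Finset.abs_sum_le_sum_abs _ _
      _ ≤ ∑ k, ((Nat.factorial d : ℝ) * m ^ (d-1)) * |(B *ᵥ y) k| := by
          refine Finset.sum_le_sum fun k _ => ?_
          rw [abs_mul]
          exact mul_le_mul_of_nonneg_right (hadj i k) (abs_nonneg _)
      _ = ((Nat.factorial d : ℝ) * m ^ (d-1)) * norm1R (B *ᵥ y) := by
          rw [← Finset.mul_sum]; rfl
      _ = ((Nat.factorial d : ℝ) * m ^ (d-1)) * V := by rw [hVnorm]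
  have hmain : m ^ d * norm1R y ≤ (d : ℝ) * ((Nat.factorial d : ℝ) * m ^ (d-1)) * V := by
    calc m ^ d * norm1R y = ∑ i, m ^ d * |y i| := by
          unfold norm1R; rw [Finset.mul_sum]
      _ ≤ ∑ i, |B.det| * |y i| :=
          Finset.sum_le_sum fun i _ =>
            mul_le_mul_of_nonneg_right hdet (abs_nonneg _)
      _ ≤ ∑ _i : Fin d, ((Nat.factorial d : ℝ) * m ^ (d-1)) * V :=
          Finset.sum_le_sum fun i _ => hrow i
      _ = (d : ℝ) * ((Nat.factorial d : ℝ) * m ^ (d-1)) * V := by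
          rw [Finset.sum_const, Finset.card_univ, Fintype.card_fin, nsmul_eq_mul]; ring
  have hxm : norm1R x ≤ (d : ℝ) * m := by
    unfold norm1R
    calc ∑ i, |x i| ≤ ∑ _i : Fin d, m := Finset.sum_le_sum fun i _ => hi₀ i
      _ = (d : ℝ) * m := by
          rw [Finset.sum_const, Finset.card_univ, Fintype.card_fin, nsmul_eq_mul]
  by_cases hm' : m = 0
  · have hx0 : norm1R x = 0 := by
      have : norm1R x ≤ 0 := by rw [hm'] at hxm; simpa using hxm
      exact le_antisymm this (norm1R_nonneg x)
    rw [hx0]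
    simpa using hV0
  · have hmpos : 0 < m := lt_of_le_of_ne hm0 (Ne.symm hm')
    have hpow : (0:ℝ) < m ^ (d-1) := pow_pos hmpos _
    have hstep : m * norm1R y ≤ ((d:ℝ) * Nat.factorial d) * V := by
      have hdd : d - 1 + 1 = d := by omega
      have hxd : m ^ d = m ^ (d-1) * m := by rw [← pow_succ, hdd]
      have h1 : (m * norm1R y) * m ^ (d-1) ≤ (((d:ℝ) * Nat.factorial d) * V) * m ^ (d-1) := by
        calc (m * norm1R y) * m ^ (d-1) = m ^ d * norm1R y := by rw [hxd]; ring
          _ ≤ (d : ℝ) * ((Nat.factorial d : ℝ) * m ^ (d-1)) * V := hmain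
          _ = (((d:ℝ) * Nat.factorial d) * V) * m ^ (d-1) := by ring
      exact (mul_le_mul_iff_of_pos_right hpow).mp h1
    have hy0 : 0 ≤ norm1R y := norm1R_nonneg y
    have h2 : norm1R x * norm1R y ≤ ((d:ℝ)^2 * Nat.factorial d) * V := by
      calc norm1R x * norm1R y ≤ ((d:ℝ) * m) * norm1R y :=
            mul_le_mul_of_nonneg_right hxm hy0
        _ = (d:ℝ) * (m * norm1R y) := by ring
        _ ≤ (d:ℝ) * (((d:ℝ) * Nat.factorial d) * V) :=
            mul_le_mul_of_nonneg_left hstep (by positivity)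
        _ = ((d:ℝ)^2 * Nat.factorial d) * V := by ring
    calc c * norm1R x * norm1R y = c * (norm1R x * norm1R y) := by ring
      _ ≤ c * (((d:ℝ)^2 * Nat.factorial d) * V) :=
          mul_le_mul_of_nonneg_left h2 (le_of_lt (inv_pos.mpr hK))
      _ = (c * ((d:ℝ)^2 * Nat.factorial d)) * V := by ring
      _ = V := by rw [hc, inv_mul_cancel₀ (ne_of_gt hK), one_mul]

end
end
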